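/- Massive-MIMO full-power feasibility threshold (deterministic core of Theorem 8, eq. (68)): Let N_a ≥ 1 and n ≥ 1 be integers, σ_b, σ_w, λ_b, λ_w, δ, P > 0 real numbers, and let u_b, u_w ∈ ℂ^{N_a} be unit vectors. Let W_b := λ_b • (outer product of u_b with itself) and W_w := λ_w • (outer product of u_w with itself). If |⟨u_w, u_b⟩|² ≤ √2·σ_w²·δ/(√n·λ_w·P), then the full-power covariance Q₀ := P • (outer product of u_b with itself) satisfies n·D(W_w, Q₀) ≤ 2δ², and consequently sSup { R(Q) : Q an N_a×N_a complex Hermitian positive semidefinite matrix with (Q.trace).re ≤ P and n·D(W_w, Q) ≤ 2δ² } = Real.log(1 + λ_b·P/σ_b²), the non-LPD-constrained capacity. -/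

import Mathlib

open Matrix
open scoped ComplexOrder InnerProductSpace

/-- The detection (relative-entropy) functional at Willie:
`D(W, Q) = log (det (1 + σ_w⁻² W Q)).re + ((1 + σ_w⁻² W Q)⁻¹.trace).re − N_a`. -/
noncomputable def Dfun {Na : ℕ} (σw : ℝ) (W Q : Matrix (Fin Na) (Fin Na) ℂ) : ℝ :=
  Real.log ((1 + (σw ^ 2)⁻¹ • (W * Q)).det.re)
    + (((1 + (σw ^ 2)⁻¹ • (W * Q))⁻¹).trace).re - Na

/-- The rate functional for Bob's channel: `R(Q) = log (det (1 + σ_b⁻² W_b Q)).re`. -/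
noncomputable def Rfun {Na : ℕ} (σb : ℝ) (Wb Q : Matrix (Fin Na) (Fin Na) ℂ) : ℝ :=
  Real.log ((1 + (σb ^ 2)⁻¹ • (Wb * Q)).det.re)

/-- The outer product `u uᴴ` of a vector with itself, with `(i,j)` entry `u i * conj (u j)`. -/
noncomputable def outer {Na : ℕ} (u : EuclideanSpace ℂ (Fin Na)) :
    Matrix (Fin Na) (Fin Na) ℂ :=
  Matrix.of fun i j => u i * star (u j)

variable {Na : ℕ}

/-! ### Rank-one matrix computations -/

lemma vecMulVec_mul_vecMulVec' (v w x y : Fin Na → ℂ) :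
    vecMulVec v w * vecMulVec x y = (w ⬝ᵥ x) • vecMulVec v y := by
  ext i j
  simp only [Matrix.mul_apply, vecMulVec_apply, Matrix.smul_apply, dotProduct,
    smul_eq_mul, Finset.sum_mul]
  refine Finset.sum_congr rfl fun k _ => by ring

lemma one_add_rankOne (v w : Fin Na → ℂ) (t : ℝ) (ht : 0 ≤ t) (hdot : w ⬝ᵥ v = (t : ℂ)) :
    (1 + vecMulVec v w).det.re = 1 + t ∧
    ((1 + vecMulVec v w)⁻¹).trace.re = Na - t / (1 + t) := by
  have h1t : (0:ℝ) < 1 + t := by linarith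
  have h1tc : ((1 + t : ℝ) : ℂ) ≠ 0 := by positivity
  have hdet : (1 + vecMulVec v w).det = 1 + (t : ℂ) := by
    rw [vecMulVec_eq (Fin 1), det_one_add_replicateCol_mul_replicateRow, hdot]
  have hAA : vecMulVec v w * vecMulVec v w = (t : ℂ) • vecMulVec v w := by
    rw [vecMulVec_mul_vecMulVec', hdot]
  have hc : (((1 + t : ℝ) : ℂ))⁻¹ + (((1 + t : ℝ) : ℂ))⁻¹ * t = 1 := by
    field_simp
    push_cast
    ring
  have hinv : (1 + vecMulVec v w)⁻¹ = 1 - (((1 + t : ℝ) : ℂ))⁻¹ • vecMulVec v w := by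
    apply inv_eq_right_inv
    rw [mul_sub, mul_one, add_mul, one_mul, Matrix.mul_smul, hAA, smul_smul,
      ← add_smul, hc, one_smul, add_sub_cancel_right]
  constructor
  · rw [hdet]; simp
  · rw [hinv]
    have htr : (vecMulVec v w).trace = (t : ℂ) := by
      rw [Matrix.trace]
      simpa [Matrix.diag, vecMulVec_apply, dotProduct, mul_comm] using hdot
    rw [Matrix.trace_sub, Matrix.trace_smul, htr, Matrix.trace_one]
    have h2 : (((1 + t : ℝ) : ℂ))⁻¹ • (t : ℂ) = ((t / (1 + t) : ℝ) : ℂ) := by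
      rw [smul_eq_mul, div_eq_inv_mul, Complex.ofReal_mul, Complex.ofReal_inv]
    rw [h2, Complex.sub_re, Complex.ofReal_re, Complex.natCast_re, Fintype.card_fin]

/-! ### Outer-product shape lemmas -/

lemma smul_outer_mul (l σ : ℝ) (u : EuclideanSpace ℂ (Fin Na))
    (Q : Matrix (Fin Na) (Fin Na) ℂ) :
    (σ ^ 2)⁻¹ • ((l : ℂ) • outer u * Q) =
      vecMulVec ((((σ ^ 2)⁻¹ * l : ℝ) : ℂ) • fun i => u i)
        ((fun k => star (u k)) ᵥ* Q) := by
  ext i j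
  simp only [Matrix.smul_apply, Matrix.mul_apply, outer, Matrix.of_apply,
    vecMulVec_apply, Pi.smul_apply, Matrix.vecMul, dotProduct, smul_eq_mul,
    Complex.real_smul, Complex.ofReal_mul, Complex.ofReal_inv, Finset.mul_sum]
  refine Finset.sum_congr rfl fun k _ => by push_cast; ring

lemma dot_value (c : ℝ) (u : EuclideanSpace ℂ (Fin Na)) (Q : Matrix (Fin Na) (Fin Na) ℂ) :
    ((fun k => star (u k)) ᵥ* Q) ⬝ᵥ ((c : ℂ) • fun i => u i)
      = (c : ℂ) * ((fun k => star (u k)) ⬝ᵥ (Q *ᵥ fun i => u i)) := by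
  rw [← Matrix.dotProduct_mulVec, Matrix.mulVec_smul]
  simp only [dotProduct, Pi.smul_apply, smul_eq_mul, Finset.mul_sum]
  refine Finset.sum_congr rfl fun k _ => by ring

/-! ### Positive semidefiniteness facts -/

lemma psd_quad_real {Q : Matrix (Fin Na) (Fin Na) ℂ} (hQ : Q.PosSemidef)
    (u : EuclideanSpace ℂ (Fin Na)) :
    ((fun k => star (u k)) ⬝ᵥ (Q *ᵥ fun i => u i))
      = ((((fun k => star (u k)) ⬝ᵥ (Q *ᵥ fun i => u i)).re : ℝ) : ℂ) ∧
      0 ≤ ((fun k => star (u k)) ⬝ᵥ (Q *ᵥ fun i => u i)).re := by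
  have h := hQ.dotProduct_mulVec_nonneg (fun i => u i)
  rw [Complex.nonneg_iff] at h
  have hs : star (fun i => u i) = fun k => star (u k) := rfl
  rw [hs] at h
  exact ⟨Complex.ext (by simp) (by simpa using h.2.symm), h.1⟩

lemma psd_trace_re_nonneg {M : Matrix (Fin Na) (Fin Na) ℂ} (hM : M.PosSemidef) :
    0 ≤ M.trace.re := by
  rw [Matrix.trace, Complex.re_sum]
  refine Finset.sum_nonneg fun i _ => ?_
  have h := hM.dotProduct_mulVec_nonneg (Pi.single i 1)
  rw [Complex.nonneg_iff] at h
  have hv : star (Pi.single i 1) ⬝ᵥ M *ᵥ Pi.single i 1 = M.diag i := by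
    simp [Matrix.mulVec_single, dotProduct, Pi.single_apply, apply_ite, Finset.sum_ite_eq]
  rw [hv] at h
  exact h.1

lemma outer_hermitian (u : EuclideanSpace ℂ (Fin Na)) : (outer u).IsHermitian := by
  ext i j
  simp only [conjTranspose_apply, outer, Matrix.of_apply, star_mul', star_star]
  exact mul_comm _ _

lemma outer_mulVec (u : EuclideanSpace ℂ (Fin Na)) (x : Fin Na → ℂ) :
    outer u *ᵥ x = ((fun k => star (u k)) ⬝ᵥ x) • fun i => u i := by
  ext i
  simp only [Matrix.mulVec, dotProduct, outer, Matrix.of_apply, Pi.smul_apply, smul_eq_mul,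
    Finset.sum_mul, Finset.mul_sum]
  refine Finset.sum_congr rfl fun k _ => by ring

lemma quad_outer_eq (u : EuclideanSpace ℂ (Fin Na)) (x : Fin Na → ℂ) :
    star x ⬝ᵥ (outer u *ᵥ x)
      = ((‖⟪u, (WithLp.equiv 2 (Fin Na → ℂ)).symm x⟫_ℂ‖ ^ 2 : ℝ) : ℂ) := by
  rw [outer_mulVec]
  set e : EuclideanSpace ℂ (Fin Na) := (WithLp.equiv 2 (Fin Na → ℂ)).symm x with he
  set z := ⟪u, e⟫_ℂ with hz
  have h1 : (fun k => star (u k)) ⬝ᵥ x = z := by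
    simp [hz, PiLp.inner_apply, RCLike.inner_apply, dotProduct, he,
      WithLp.equiv_symm_apply]
    exact Finset.sum_congr rfl fun i _ => mul_comm _ _
  have h2 : star x ⬝ᵥ (fun i => u i) = star z := by
    simp only [hz, PiLp.inner_apply, RCLike.inner_apply, dotProduct, star_sum, star_mul',
      Pi.star_apply, Complex.star_def, Complex.conj_conj, he, WithLp.equiv_symm_apply, WithLp.ofLp_toLp]
  rw [dotProduct_smul, h1, smul_eq_mul, h2]
  rw [Complex.star_def, Complex.mul_conj, Complex.normSq_eq_norm_sq]

lemma one_sub_outer_psd (u : EuclideanSpace ℂ (Fin Na)) (hu : ‖u‖ = 1) :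
    (1 - outer u : Matrix (Fin Na) (Fin Na) ℂ).PosSemidef := by
  refine Matrix.PosSemidef.of_dotProduct_mulVec_nonneg ?_ ?_
  · exact Matrix.isHermitian_one.sub (outer_hermitian u)
  · intro x
    rw [Matrix.sub_mulVec, dotProduct_sub, Matrix.one_mulVec, quad_outer_eq]
    set e : EuclideanSpace ℂ (Fin Na) := (WithLp.equiv 2 (Fin Na → ℂ)).symm x with he
    set z := ⟪u, e⟫_ℂ with hz
    have hx1 : star x ⬝ᵥ x = ((‖e‖ ^ 2 : ℝ) : ℂ) := by
      have hn : ‖e‖ ^ 2 = ∑ i, ‖x i‖ ^ 2 := by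
        rw [EuclideanSpace.norm_eq, Real.sq_sqrt (Finset.sum_nonneg fun i _ => sq_nonneg _)]
        simp [he, WithLp.equiv_symm_apply]
      rw [hn]
      push_cast
      simp only [dotProduct, Pi.star_apply, Complex.star_def]
      refine Finset.sum_congr rfl fun i _ => ?_
      rw [← Complex.normSq_eq_conj_mul_self, Complex.normSq_eq_norm_sq]
      push_cast
      ring
    rw [hx1, ← Complex.ofReal_sub, Complex.zero_le_real, sub_nonneg]
    have hle : ‖z‖ ≤ ‖e‖ := by simpa [hu] using norm_inner_le_norm (𝕜 := ℂ) u e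
    exact pow_le_pow_left₀ (norm_nonneg _) hle 2

lemma trace_outer_mul (u : EuclideanSpace ℂ (Fin Na)) (Q : Matrix (Fin Na) (Fin Na) ℂ) :
    (outer u * Q).trace = (fun k => star (u k)) ⬝ᵥ (Q *ᵥ fun i => u i) := by
  rw [Matrix.trace]
  simp only [Matrix.diag, Matrix.mul_apply, outer, Matrix.of_apply, dotProduct, Matrix.mulVec,
    Finset.mul_sum]
  rw [Finset.sum_comm]
  exact Finset.sum_congr rfl fun k _ => Finset.sum_congr rfl fun i _ => by ring

open scoped MatrixOrder

lemma quad_le_trace {Q : Matrix (Fin Na) (Fin Na) ℂ} (hQ : Q.PosSemidef)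
    (u : EuclideanSpace ℂ (Fin Na)) (hu : ‖u‖ = 1) :
    ((fun k => star (u k)) ⬝ᵥ (Q *ᵥ fun i => u i)).re ≤ Q.trace.re := by
  classical
  have hherm : (CFC.sqrt Q)ᴴ = CFC.sqrt Q := (CFC.sqrt_nonneg Q).posSemidef.isHermitian
  have hM : ((CFC.sqrt Q)ᴴ * (1 - outer u) * CFC.sqrt Q).PosSemidef :=
    (one_sub_outer_psd u hu).conjTranspose_mul_mul_same (CFC.sqrt Q)
  have h0 := psd_trace_re_nonneg hM
  have htr : ((CFC.sqrt Q)ᴴ * (1 - outer u) * CFC.sqrt Q).trace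
      = Q.trace - (outer u * Q).trace := by
    rw [hherm, Matrix.trace_mul_comm, ← Matrix.mul_assoc, CFC.sqrt_mul_sqrt_self Q hQ.nonneg, Matrix.mul_sub,
      Matrix.mul_one, Matrix.trace_sub, Matrix.trace_mul_comm]
  rw [htr, Complex.sub_re, trace_outer_mul] at h0
  linarith

lemma smul_outer_psd (P : ℝ) (hP : 0 ≤ P) (u : EuclideanSpace ℂ (Fin Na)) :
    ((P : ℂ) • outer u).PosSemidef := by
  refine Matrix.PosSemidef.of_dotProduct_mulVec_nonneg ?_ ?_
  · rw [Matrix.IsHermitian, Matrix.conjTranspose_smul, Complex.star_def, Complex.conj_ofReal,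
      outer_hermitian u]
  · intro x
    rw [Matrix.smul_mulVec, dotProduct_smul, smul_eq_mul, quad_outer_eq,
      ← Complex.ofReal_mul, Complex.zero_le_real]
    positivity

lemma trace_smul_outer (P : ℝ) (u : EuclideanSpace ℂ (Fin Na)) (hu : ‖u‖ = 1) :
    ((P : ℂ) • outer u).trace = (P : ℂ) := by
  rw [Matrix.trace_smul, smul_eq_mul]
  have : (outer u).trace = 1 := by
    rw [Matrix.trace]
    have h := inner_self_eq_norm_sq_to_K (𝕜 := ℂ) u
    rw [PiLp.inner_apply, hu] at h
    simp only [RCLike.inner_apply] at h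
    push_cast at h
    simp only [one_pow] at h
    rw [← h]
    simp only [Matrix.diag, outer, Matrix.of_apply, Complex.star_def]
  rw [this, mul_one]

/-! ### Evaluation of the functionals on rank-one signal directions -/

lemma Dfun_eval (σ l : ℝ) (hσ : 0 < σ) (hl : 0 < l) (u : EuclideanSpace ℂ (Fin Na))
    {Q : Matrix (Fin Na) (Fin Na) ℂ} (hQ : Q.PosSemidef) :
    Dfun σ ((l : ℂ) • outer u) Q
      = Real.log (1 + (σ ^ 2)⁻¹ * l * ((fun k => star (u k)) ⬝ᵥ (Q *ᵥ fun i => u i)).re)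
        - ((σ ^ 2)⁻¹ * l * ((fun k => star (u k)) ⬝ᵥ (Q *ᵥ fun i => u i)).re)
          / (1 + (σ ^ 2)⁻¹ * l * ((fun k => star (u k)) ⬝ᵥ (Q *ᵥ fun i => u i)).re) := by
  obtain ⟨hval, hx0⟩ := psd_quad_real hQ u
  set x := ((fun k => star (u k)) ⬝ᵥ (Q *ᵥ fun i => u i)).re with hx
  set t := (σ ^ 2)⁻¹ * l * x with htdef
  have ht : 0 ≤ t := by positivity
  have hdot : ((fun k => star (u k)) ᵥ* Q) ⬝ᵥ ((((σ ^ 2)⁻¹ * l : ℝ) : ℂ) • fun i => u i)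
      = (t : ℂ) := by
    rw [dot_value, hval, ← Complex.ofReal_mul]
  obtain ⟨hdet, htrace⟩ := one_add_rankOne _ _ t ht hdot
  rw [Dfun, smul_outer_mul, hdet, htrace]
  ring

lemma Rfun_eval (σ l : ℝ) (hσ : 0 < σ) (hl : 0 < l) (u : EuclideanSpace ℂ (Fin Na))
    {Q : Matrix (Fin Na) (Fin Na) ℂ} (hQ : Q.PosSemidef) :
    Rfun σ ((l : ℂ) • outer u) Q
      = Real.log (1 + (σ ^ 2)⁻¹ * l * ((fun k => star (u k)) ⬝ᵥ (Q *ᵥ fun i => u i)).re) := by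
  obtain ⟨hval, hx0⟩ := psd_quad_real hQ u
  set x := ((fun k => star (u k)) ⬝ᵥ (Q *ᵥ fun i => u i)).re with hx
  set t := (σ ^ 2)⁻¹ * l * x with htdef
  have ht : 0 ≤ t := by positivity
  have hdot : ((fun k => star (u k)) ᵥ* Q) ⬝ᵥ ((((σ ^ 2)⁻¹ * l : ℝ) : ℂ) • fun i => u i)
      = (t : ℂ) := by
    rw [dot_value, hval, ← Complex.ofReal_mul]
  obtain ⟨hdet, -⟩ := one_add_rankOne _ _ t ht hdot
  rw [Rfun, smul_outer_mul, hdet]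

/-! ### The scalar inequality -/

lemma log_ineq (t : ℝ) (ht : 0 ≤ t) :
    Real.log (1 + t) - t / (1 + t) ≤ t ^ 2 := by
  have h1 : (0:ℝ) < 1 + t := by linarith
  have hlog : Real.log (1 + t) ≤ t := by
    have := Real.log_le_sub_one_of_pos h1
    linarith
  have h2 : t - t / (1 + t) = t ^ 2 / (1 + t) := by
    field_simp
    ring
  have h3 : t ^ 2 / (1 + t) ≤ t ^ 2 := div_le_self (by positivity) (by linarith)
  linarith
/-- **Massive-MIMO full-power feasibility threshold (deterministic core of Theorem 8, eq. (68)).**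
If `|⟨u_w, u_b⟩|² ≤ √2·σ_w²·δ/(√n·λ_w·P)`, then the full-power covariance
`Q₀ = P u_b u_bᴴ` satisfies `n·D(W_w, Q₀) ≤ 2δ²`, and the `δ`-PD constrained capacity equals
the unconstrained capacity `log(1 + λ_b·P/σ_b²)`. -/
theorem massive_mimo_full_power_threshold (Na n : ℕ) (hNa : 1 ≤ Na) (hn : 1 ≤ n)
    (σb σw lb lw δ P : ℝ) (hσb : 0 < σb) (hσw : 0 < σw) (hlb : 0 < lb) (hlw : 0 < lw)
    (hδ : 0 < δ) (hP : 0 < P)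
    (ub uw : EuclideanSpace ℂ (Fin Na)) (hub : ‖ub‖ = 1) (huw : ‖uw‖ = 1)
    (hthr : ‖(⟪uw, ub⟫_ℂ)‖ ^ 2 ≤ Real.sqrt 2 * σw ^ 2 * δ / (Real.sqrt n * lw * P)) :
    (n : ℝ) * Dfun σw ((lw : ℂ) • outer uw) ((P : ℂ) • outer ub) ≤ 2 * δ ^ 2 ∧
    sSup {r : ℝ | ∃ Q : Matrix (Fin Na) (Fin Na) ℂ, Q.PosSemidef ∧
        (Q.trace).re ≤ P ∧
        (n : ℝ) * Dfun σw ((lw : ℂ) • outer uw) Q ≤ 2 * δ ^ 2 ∧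
        r = Rfun σb ((lb : ℂ) • outer ub) Q}
      = Real.log (1 + lb * P / σb ^ 2) := by
  have hnR : (1:ℝ) ≤ n := by exact_mod_cast hn
  have hnpos : (0:ℝ) < n := by linarith
  set Q₀ : Matrix (Fin Na) (Fin Na) ℂ := (P : ℂ) • outer ub with hQ₀
  have hQ₀psd : Q₀.PosSemidef := smul_outer_psd P hP.le ub
  -- the quadratic form of Q₀ against any direction
  have hquad : ∀ v : EuclideanSpace ℂ (Fin Na),
      ((fun k => star (v k)) ⬝ᵥ (Q₀ *ᵥ fun i => v i)) = ((P * ‖⟪ub, v⟫_ℂ‖ ^ 2 : ℝ) : ℂ) := by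
    intro v
    rw [hQ₀, Matrix.smul_mulVec, dotProduct_smul, smul_eq_mul,
      show (fun k => star (v k)) = star (fun i => v i) from rfl, quad_outer_eq ub (fun i => v i),
      show ((WithLp.equiv 2 (Fin Na → ℂ)).symm (fun i => v i)) = v from rfl]
    push_cast
    ring
  have hsym : ‖⟪ub, uw⟫_ℂ‖ = ‖⟪uw, ub⟫_ℂ‖ := by
    rw [← inner_conj_symm]
    exact norm_star _
  set s := ‖⟪uw, ub⟫_ℂ‖ ^ 2 with hsdef
  have hs0 : 0 ≤ s := by positivity
  set t := (σw ^ 2)⁻¹ * lw * (P * s) with htdef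
  have ht0 : 0 ≤ t := by positivity
  -- value of the detection functional at Q₀
  have hD : Dfun σw ((lw : ℂ) • outer uw) Q₀
      = Real.log (1 + t) - t / (1 + t) := by
    rw [Dfun_eval σw lw hσw hlw uw hQ₀psd, hquad uw, Complex.ofReal_re, hsym, ← hsdef, ← htdef]
  -- part 1: feasibility
  have htle : t ≤ Real.sqrt 2 * δ / Real.sqrt n := by
    have hsn : (0:ℝ) < Real.sqrt n := Real.sqrt_pos.2 hnpos
    have hkey : (σw ^ 2)⁻¹ * lw * P * (Real.sqrt 2 * σw ^ 2 * δ / (Real.sqrt n * lw * P))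
        = Real.sqrt 2 * δ / Real.sqrt n := by
      field_simp
    calc t = (σw ^ 2)⁻¹ * lw * P * s := by rw [htdef]; ring
    _ ≤ (σw ^ 2)⁻¹ * lw * P * (Real.sqrt 2 * σw ^ 2 * δ / (Real.sqrt n * lw * P)) :=
        mul_le_mul_of_nonneg_left hthr (by positivity)
    _ = Real.sqrt 2 * δ / Real.sqrt n := hkey
  have hsq : t ^ 2 ≤ 2 * δ ^ 2 / n := by
    have h2 : (Real.sqrt 2 * δ / Real.sqrt n) ^ 2 = 2 * δ ^ 2 / n := by
      rw [div_pow, mul_pow, Real.sq_sqrt (by norm_num : (0:ℝ) ≤ 2),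
        Real.sq_sqrt hnpos.le]
    rw [← h2]
    exact pow_le_pow_left₀ ht0 htle 2
  have hfeas : (n : ℝ) * Dfun σw ((lw : ℂ) • outer uw) Q₀ ≤ 2 * δ ^ 2 := by
    calc (n : ℝ) * Dfun σw ((lw : ℂ) • outer uw) Q₀
        = n * (Real.log (1 + t) - t / (1 + t)) := by rw [hD]
    _ ≤ n * t ^ 2 := mul_le_mul_of_nonneg_left (log_ineq t ht0) (Nat.cast_nonneg n)
    _ ≤ n * (2 * δ ^ 2 / n) := mul_le_mul_of_nonneg_left hsq (Nat.cast_nonneg n)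
    _ = 2 * δ ^ 2 := by field_simp
  refine ⟨hfeas, ?_⟩
  -- part 2: the constrained capacity
  apply IsGreatest.csSup_eq
  constructor
  · refine ⟨Q₀, hQ₀psd, ?_, hfeas, ?_⟩
    · rw [hQ₀, trace_smul_outer P ub hub, Complex.ofReal_re]
    · rw [Rfun_eval σb lb hσb hlb ub hQ₀psd, hquad ub, Complex.ofReal_re]
      have hug : ⟪ub, ub⟫_ℂ = 1 := by
        rw [inner_self_eq_norm_sq_to_K, hub]
        norm_num
      rw [hug]
      norm_num
      congr 1
      field_simp
  · rintro r ⟨Q, hQpsd, htrQ, -, rfl⟩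
    rw [Rfun_eval σb lb hσb hlb ub hQpsd]
    set y := ((fun k => star (ub k)) ⬝ᵥ (Q *ᵥ fun i => ub i)).re with hy
    have hy0 : 0 ≤ y := (psd_quad_real hQpsd ub).2
    have hyP : y ≤ P := le_trans (quad_le_trace hQpsd ub hub) htrQ
    have harg : (0:ℝ) < 1 + (σb ^ 2)⁻¹ * lb * y := by positivity
    have hmono : 1 + (σb ^ 2)⁻¹ * lb * y ≤ 1 + lb * P / σb ^ 2 := by
      have h1 : (σb ^ 2)⁻¹ * lb * y ≤ (σb ^ 2)⁻¹ * lb * P :=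
        mul_le_mul_of_nonneg_left hyP (by positivity)
      have h2 : (σb ^ 2)⁻¹ * lb * P = lb * P / σb ^ 2 := by
        field_simp
      linarith
    exact Real.log_le_log harg hmono
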